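/- In ℂ ≅ ℝ²: (a) the square G_U = convexHull{0, 2, 1+i, 1−i} is an exact fundamental domain for the action of the lattice (1+i)ℤ[i] on ℂ by translations; (b) the triangle G = convexHull{1, 2, 1+i} satisfies: G_U is the union of ρᵏ(G) for k = 0,1,2,3, where ρ(z) = i(z−1)+1 is rotation by π/2 about 1, with ρᵏ(G) ∩ G contained in the boundary of G for k ≢ 0 mod 4; and (c) G is an exact fundamental domain for the action on ℂ of the group A = {z ↦ iᵏ·z + c : k ∈ ℤ, c ∈ (1+i)ℤ[i]} of affine transformations (the action of Γ*^{φ₁} induced on the boundary ℂ of ℍ³). -/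

import Mathlib

noncomputable section
open Complex

/-- The lattice `(1+i)ℤ[i] ⊆ ℂ`. -/
def Lat1i : Set ℂ := {c | ∃ a b : ℤ, c = (1 + Complex.I) * ((a : ℂ) + (b : ℂ) * Complex.I)}

/-- The square `G_U = convexHull{0, 2, 1+i, 1−i}`. -/
def GU : Set ℂ := convexHull ℝ ({0, 2, 1 + Complex.I, 1 - Complex.I} : Set ℂ)

/-- The triangle `G = convexHull{1, 2, 1+i}`. -/
def Gtri : Set ℂ := convexHull ℝ ({1, 2, 1 + Complex.I} : Set ℂ)

/-- Rotation by `π/2` about `1`. -/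
def rho : ℂ → ℂ := fun z => Complex.I * (z - 1) + 1

lemma mem_hull3 {A B C z : ℂ} {a b c : ℝ} (ha : 0 ≤ a) (hb : 0 ≤ b) (hc : 0 ≤ c)
    (hs : a + b + c = 1) (hz : z = a • A + b • B + c • C) :
    z ∈ convexHull ℝ ({A, B, C} : Set ℂ) := by
  have h := Finset.centerMass_mem_convexHull (s := ({A, B, C} : Set ℂ))
    (Finset.univ : Finset (Fin 3)) (w := ![a, b, c])
    (by intro i _; fin_cases i <;> simpa)
    (by simp [Fin.sum_univ_three, hs])
    (z := ![A, B, C]) (by intro i _; fin_cases i <;> simp)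
  rw [Finset.centerMass_eq_of_sum_1 _ _ (by simp [Fin.sum_univ_three, hs]),
    Fin.sum_univ_three] at h
  rw [hz]; simpa using h

lemma mem_hull4 {A B C D z : ℂ} {a b c d : ℝ} (ha : 0 ≤ a) (hb : 0 ≤ b) (hc : 0 ≤ c)
    (hd : 0 ≤ d) (hs : a + b + c + d = 1) (hz : z = a • A + b • B + c • C + d • D) :
    z ∈ convexHull ℝ ({A, B, C, D} : Set ℂ) := by
  have h := Finset.centerMass_mem_convexHull (s := ({A, B, C, D} : Set ℂ))
    (Finset.univ : Finset (Fin 4)) (w := ![a, b, c, d])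
    (by intro i _; fin_cases i <;> simpa)
    (by simp [Fin.sum_univ_four, hs])
    (z := ![A, B, C, D]) (by intro i _; fin_cases i <;> simp)
  rw [Finset.centerMass_eq_of_sum_1 _ _ (by simp [Fin.sum_univ_four, hs]),
    Fin.sum_univ_four] at h
  rw [hz]; simpa using h

lemma mem_Gtri {z : ℂ} : z ∈ Gtri ↔ 1 ≤ z.re ∧ 0 ≤ z.im ∧ z.re + z.im ≤ 2 := by
  constructor
  · intro hz
    have hconv : Convex ℝ {z : ℂ | 1 ≤ z.re ∧ 0 ≤ z.im ∧ z.re + z.im ≤ 2} := by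
      intro x hx y hy a b ha hb hab
      simp only [Set.mem_setOf_eq, Complex.add_re, Complex.add_im, Complex.smul_re,
        Complex.smul_im, smul_eq_mul] at *
      refine ⟨by nlinarith [hx.1, hy.1], by nlinarith [hx.2.1, hy.2.1], by nlinarith [hx.2.2, hy.2.2]⟩
    have := convexHull_min (by
      intro w hw
      simp only [Set.mem_insert_iff, Set.mem_singleton_iff] at hw
      rcases hw with rfl | rfl | rfl <;> norm_num) hconv hz
    exact this
  · rintro ⟨h1, h2, h3⟩
    refine mem_hull3 (a := 2 - z.re - z.im) (b := z.re - 1) (c := z.im)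
      (by linarith) (by linarith) h2 (by ring) ?_
    apply Complex.ext <;> simp [Complex.smul_re, Complex.smul_im] <;> ring

lemma mem_GU {z : ℂ} : z ∈ GU ↔ z.im ≤ z.re ∧ -z.re ≤ z.im ∧ z.re + z.im ≤ 2 ∧ z.re - z.im ≤ 2 := by
  constructor
  · intro hz
    have hconv : Convex ℝ {z : ℂ | z.im ≤ z.re ∧ -z.re ≤ z.im ∧ z.re + z.im ≤ 2 ∧ z.re - z.im ≤ 2} := by
      intro x hx y hy a b ha hb hab
      simp only [Set.mem_setOf_eq, Complex.add_re, Complex.add_im, Complex.smul_re,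
        Complex.smul_im, smul_eq_mul] at *
      exact ⟨by nlinarith [hx.1, hy.1], by nlinarith [hx.2.1, hy.2.1],
        by nlinarith [hx.2.2.1, hy.2.2.1], by nlinarith [hx.2.2.2, hy.2.2.2]⟩
    exact convexHull_min (by
      intro w hw
      simp only [Set.mem_insert_iff, Set.mem_singleton_iff] at hw
      rcases hw with rfl | rfl | rfl | rfl <;> norm_num) hconv hz
  · rintro ⟨h1, h2, h3, h4⟩
    -- weights: a at 0, b at 2, c at 1+i, d at 1-i
    -- c - d = y, c + d = |y|... use c = (y + |y|)/2? avoid abs: c = max y 0, d = max (-y) 0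
    refine mem_hull4 (a := (2 - z.re - |z.im|) / 2) (b := (z.re - |z.im|) / 2)
      (c := (z.im + |z.im|) / 2) (d := (|z.im| - z.im) / 2)
      ?_ ?_ ?_ ?_ (by ring) ?_
    · rcases abs_cases z.im with ⟨h, _⟩ | ⟨h, _⟩ <;> rw [h] <;> linarith
    · rcases abs_cases z.im with ⟨h, _⟩ | ⟨h, _⟩ <;> rw [h] <;> linarith
    · rcases abs_cases z.im with ⟨h, _⟩ | ⟨h, _⟩ <;> rw [h] <;> linarith
    · rcases abs_cases z.im with ⟨h, _⟩ | ⟨h, _⟩ <;> rw [h] <;> linarith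
    · apply Complex.ext <;> simp [Complex.smul_re, Complex.smul_im] <;> ring

lemma ball_mem {z w : ℂ} {ε : ℝ} {S : Set ℂ} (hb : Metric.ball z ε ⊆ S)
    (hw : ‖w‖ < ε) : z + w ∈ S := by
  apply hb
  simp [Metric.mem_ball, Complex.dist_eq]
  simpa using hw

lemma abs_lt_of_re_im {w : ℂ} {ε : ℝ} (h : |w.re| + |w.im| < ε) : ‖w‖ < ε :=
  lt_of_le_of_lt (Complex.norm_le_abs_re_add_abs_im w) h

lemma interior_Gtri : interior Gtri = {z : ℂ | 1 < z.re ∧ 0 < z.im ∧ z.re + z.im < 2} := by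
  apply Set.Subset.antisymm
  · intro z hz
    obtain ⟨ε, hε, hball⟩ := Metric.mem_nhds_iff.mp (mem_interior_iff_mem_nhds.mp hz)
    have h1 := mem_Gtri.mp (ball_mem hball (w := -(↑(ε/2) : ℂ))
      (abs_lt_of_re_im (by simp; rw [abs_of_pos (by linarith)]; linarith)))
    have h2 := mem_Gtri.mp (ball_mem hball (w := -(↑(ε/2) : ℂ) * Complex.I)
      (abs_lt_of_re_im (by simp; rw [abs_of_pos (by linarith)]; linarith)))
    have h3 := mem_Gtri.mp (ball_mem hball (w := (↑(ε/4) : ℂ) * (1 + Complex.I))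
      (abs_lt_of_re_im (by
        simp [Complex.mul_re, Complex.mul_im]
        rw [abs_of_pos (by linarith)]; linarith)))
    simp only [Complex.add_re, Complex.add_im, Complex.mul_re, Complex.mul_im,
      Complex.neg_re, Complex.neg_im, Complex.ofReal_re, Complex.ofReal_im,
      Complex.I_re, Complex.I_im, Complex.one_re, Complex.one_im] at h1 h2 h3
    refine ⟨by linarith [h1.1], by linarith [h2.2.1], by linarith [h3.2.2]⟩
  · apply interior_maximal
    · intro z hz
      exact mem_Gtri.mpr ⟨le_of_lt hz.1, le_of_lt hz.2.1, le_of_lt hz.2.2⟩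
    · exact IsOpen.inter (isOpen_lt continuous_const Complex.continuous_re)
        (IsOpen.inter (isOpen_lt continuous_const Complex.continuous_im)
          (isOpen_lt (Complex.continuous_re.add Complex.continuous_im) continuous_const))

lemma interior_GU : interior GU =
    {z : ℂ | z.im < z.re ∧ -z.re < z.im ∧ z.re + z.im < 2 ∧ z.re - z.im < 2} := by
  apply Set.Subset.antisymm
  · intro z hz
    obtain ⟨ε, hε, hball⟩ := Metric.mem_nhds_iff.mp (mem_interior_iff_mem_nhds.mp hz)
    have h1 := mem_GU.mp (ball_mem hball (w := (↑(ε/4) : ℂ) * (-1 + Complex.I))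
      (abs_lt_of_re_im (by
        simp [Complex.mul_re, Complex.mul_im]
        rw [abs_of_pos (by linarith)]; linarith)))
    have h2 := mem_GU.mp (ball_mem hball (w := (↑(ε/4) : ℂ) * (-1 - Complex.I))
      (abs_lt_of_re_im (by
        simp [Complex.mul_re, Complex.mul_im]
        rw [abs_of_pos (by linarith)]; linarith)))
    have h3 := mem_GU.mp (ball_mem hball (w := (↑(ε/4) : ℂ) * (1 + Complex.I))
      (abs_lt_of_re_im (by
        simp [Complex.mul_re, Complex.mul_im]
        rw [abs_of_pos (by linarith)]; linarith)))
    have h4 := mem_GU.mp (ball_mem hball (w := (↑(ε/4) : ℂ) * (1 - Complex.I))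
      (abs_lt_of_re_im (by
        simp [Complex.mul_re, Complex.mul_im]
        rw [abs_of_pos (by linarith)]; linarith)))
    simp only [Complex.add_re, Complex.add_im, Complex.sub_re, Complex.sub_im,
      Complex.mul_re, Complex.mul_im,
      Complex.neg_re, Complex.neg_im, Complex.ofReal_re, Complex.ofReal_im,
      Complex.I_re, Complex.I_im, Complex.one_re, Complex.one_im] at h1 h2 h3 h4
    refine ⟨by linarith [h1.1], by linarith [h2.2.1], by linarith [h3.2.2.1],
      by linarith [h4.2.2.2]⟩
  · apply interior_maximal
    · intro z hz
      exact mem_GU.mpr ⟨le_of_lt hz.1, le_of_lt hz.2.1, le_of_lt hz.2.2.1, le_of_lt hz.2.2.2⟩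
    · exact IsOpen.inter (isOpen_lt Complex.continuous_im Complex.continuous_re)
        (IsOpen.inter (isOpen_lt Complex.continuous_re.neg Complex.continuous_im)
          (IsOpen.inter (isOpen_lt (Complex.continuous_re.add Complex.continuous_im) continuous_const)
            (isOpen_lt (Complex.continuous_re.sub Complex.continuous_im) continuous_const)))

lemma isClosed_Gtri : IsClosed Gtri :=
  (((Set.finite_singleton _).insert _ |>.insert _).isCompact_convexHull ℝ).isClosed

lemma isClosed_GU : IsClosed GU :=
  ((((Set.finite_singleton _).insert _ |>.insert _ |>.insert _)).isCompact_convexHull ℝ).isClosed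

lemma mem_frontier_Gtri {z : ℂ} :
    z ∈ frontier Gtri ↔ z ∈ Gtri ∧ ¬(1 < z.re ∧ 0 < z.im ∧ z.re + z.im < 2) := by
  rw [isClosed_Gtri.frontier_eq, Set.mem_diff, interior_Gtri]; rfl

lemma mem_frontier_GU {z : ℂ} :
    z ∈ frontier GU ↔ z ∈ GU ∧
      ¬(z.im < z.re ∧ -z.re < z.im ∧ z.re + z.im < 2 ∧ z.re - z.im < 2) := by
  rw [isClosed_GU.frontier_eq, Set.mem_diff, interior_GU]; rfl

lemma rho_iter (k : ℕ) (z : ℂ) : rho^[k] z = Complex.I ^ k * (z - 1) + 1 := by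
  induction k with
  | zero => simp
  | succ n ih => rw [Function.iterate_succ_apply', ih, rho, pow_succ]; ring

lemma lat_coords {c : ℂ} (hc : c ∈ Lat1i) :
    ∃ a b : ℤ, c.re = (a : ℝ) - b ∧ c.im = (a : ℝ) + b := by
  obtain ⟨a, b, rfl⟩ := hc
  exact ⟨a, b, by simp [Complex.mul_re, Complex.mul_im], by simp [Complex.mul_re, Complex.mul_im]; ring⟩

lemma lat_of_coords (a b : ℤ) : ((a : ℝ) - b : ℝ) + ((a : ℝ) + b : ℝ) * Complex.I ∈ Lat1i := by
  refine ⟨a, b, ?_⟩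
  apply Complex.ext <;> simp [Complex.mul_re, Complex.mul_im, Complex.add_re, Complex.add_im] <;> ring

lemma lat_sub {c d : ℂ} (hc : c ∈ Lat1i) (hd : d ∈ Lat1i) : c - d ∈ Lat1i := by
  obtain ⟨a, b, rfl⟩ := hc
  obtain ⟨a', b', rfl⟩ := hd
  exact ⟨a - a', b - b', by push_cast; ring⟩

lemma lat_add {c d : ℂ} (hc : c ∈ Lat1i) (hd : d ∈ Lat1i) : c + d ∈ Lat1i := by
  obtain ⟨a, b, rfl⟩ := hc
  obtain ⟨a', b', rfl⟩ := hd
  exact ⟨a + a', b + b', by push_cast; ring⟩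

lemma lat_mul_I {c : ℂ} (hc : c ∈ Lat1i) : Complex.I * c ∈ Lat1i := by
  obtain ⟨a, b, rfl⟩ := hc
  exact ⟨-b, a, by
    push_cast
    linear_combination ((1 + Complex.I) * (b : ℂ)) * Complex.I_sq⟩

lemma lat_mul_I_pow {c : ℂ} (n : ℕ) (hc : c ∈ Lat1i) : Complex.I ^ n * c ∈ Lat1i := by
  induction n with
  | zero => simpa
  | succ m ih => rw [pow_succ, mul_comm (Complex.I ^ m), mul_assoc]; exact lat_mul_I ih

lemma I_pow_cases (n : ℕ) : Complex.I ^ n = 1 ∨ Complex.I ^ n = Complex.I ∨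
    Complex.I ^ n = -1 ∨ Complex.I ^ n = -Complex.I := by
  induction n with
  | zero => simp
  | succ m ih =>
    rw [pow_succ]
    rcases ih with h | h | h | h <;> rw [h] <;> simp [Complex.I_sq] <;> tauto

lemma one_sub_I_pow_mem (n : ℕ) : 1 - Complex.I ^ n ∈ Lat1i := by
  rcases I_pow_cases n with h | h | h | h <;> rw [h]
  · exact ⟨0, 0, by simp⟩
  · exact ⟨0, -1, by push_cast; ring_nf; rw [Complex.I_sq]; ring⟩
  · exact ⟨1, -1, by push_cast; ring_nf; rw [Complex.I_sq]; ring⟩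
  · exact ⟨1, 0, by push_cast; ring⟩

lemma mem_trans_image {c z : ℂ} (S : Set ℂ) : z ∈ (fun w => w + c) '' S ↔ z - c ∈ S := by
  constructor
  · rintro ⟨w, hw, rfl⟩; simpa using hw
  · intro h; exact ⟨z - c, h, by ring⟩

lemma mem_affine_image {u v z : ℂ} (hu : u ≠ 0) (S : Set ℂ) :
    z ∈ (fun w => u * w + v) '' S ↔ u⁻¹ * (z - v) ∈ S := by
  constructor
  · rintro ⟨w, hw, rfl⟩
    have : u⁻¹ * (u * w + v - v) = w := by field_simp; ring
    rwa [this]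
  · intro h
    exact ⟨u⁻¹ * (z - v), h, by field_simp; ring⟩

-- core lemma for the triangle
lemma core {u c w : ℂ} (hu : u = 1 ∨ u = Complex.I ∨ u = -1 ∨ u = -Complex.I)
    (hc : c ∈ Lat1i) (hw : w ∈ interior Gtri) (hwc : u * w + c ∈ Gtri) :
    u = 1 ∧ c = 0 := by
  obtain ⟨a, b, hre, him⟩ := lat_coords hc
  rw [interior_Gtri] at hw
  obtain ⟨hx, hy, hxy⟩ := hw
  rw [mem_Gtri] at hwc
  simp only [Complex.add_re, Complex.add_im] at hwc
  obtain ⟨a', b', rfl⟩ := hc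
  have hre' : ((1 + Complex.I) * ((a' : ℂ) + (b' : ℂ) * Complex.I)).re = (a' : ℝ) - b' := by
    simp [Complex.mul_re]
  have him' : ((1 + Complex.I) * ((a' : ℂ) + (b' : ℂ) * Complex.I)).im = (a' : ℝ) + b' := by
    simp [Complex.mul_im]; ring
  rw [hre', him'] at hwc
  rcases hu with rfl | rfl | rfl | rfl
  · simp only [one_mul] at hwc
    obtain ⟨h1, h2, h3⟩ := hwc
    have ha : a' - b' = 0 ∧ a' + b' = 0 := by
      constructor
      · have l1 : (-1 : ℝ) < ((a' - b' : ℤ) : ℝ) := by push_cast; linarith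
        have l2 : ((a' - b' + (a' + b') : ℤ) : ℝ) < 1 := by push_cast; linarith
        have l3 : (-1 : ℝ) < ((a' + b' : ℤ) : ℝ) := by push_cast; linarith
        have m1 : (-1 : ℤ) < a' - b' := by exact_mod_cast l1
        have m2 : a' - b' + (a' + b') < 1 := by exact_mod_cast l2
        have m3 : (-1 : ℤ) < a' + b' := by exact_mod_cast l3
        omega
      · have l1 : (-1 : ℝ) < ((a' - b' : ℤ) : ℝ) := by push_cast; linarith
        have l2 : ((a' - b' + (a' + b') : ℤ) : ℝ) < 1 := by push_cast; linarith
        have l3 : (-1 : ℝ) < ((a' + b' : ℤ) : ℝ) := by push_cast; linarith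
        have m1 : (-1 : ℤ) < a' - b' := by exact_mod_cast l1
        have m2 : a' - b' + (a' + b') < 1 := by exact_mod_cast l2
        have m3 : (-1 : ℤ) < a' + b' := by exact_mod_cast l3
        omega
    have : a' = 0 ∧ b' = 0 := by omega
    refine ⟨rfl, ?_⟩
    rw [this.1, this.2]; simp
  · exfalso
    simp only [Complex.mul_re, Complex.mul_im, Complex.I_re, Complex.I_im] at hwc
    obtain ⟨h1, h2, h3⟩ := hwc
    -- X = -y + (a'-b') ≥ 1, Y = x + (a'+b') ≥ 0, sum ≤ 2
    have l1 : (1 : ℝ) < ((a' - b' : ℤ) : ℝ) := by push_cast; linarith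
    have l2 : (-2 : ℝ) < ((a' + b' : ℤ) : ℝ) := by push_cast; linarith
    have l3 : ((a' - b' + (a' + b') : ℤ) : ℝ) < 2 := by push_cast; linarith
    have m1 : (1 : ℤ) < a' - b' := by exact_mod_cast l1
    have m2 : (-2 : ℤ) < a' + b' := by exact_mod_cast l2
    have m3 : a' - b' + (a' + b') < 2 := by exact_mod_cast l3
    omega
  · exfalso
    simp only [Complex.mul_re, Complex.mul_im, Complex.neg_re, Complex.neg_im,
      Complex.one_re, Complex.one_im] at hwc
    obtain ⟨h1, h2, h3⟩ := hwc
    have l1 : (2 : ℝ) < ((a' - b' : ℤ) : ℝ) := by push_cast; linarith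
    have l2 : (0 : ℝ) < ((a' + b' : ℤ) : ℝ) := by push_cast; linarith
    have l3 : ((a' - b' + (a' + b') : ℤ) : ℝ) < 4 := by push_cast; linarith
    have m1 : (2 : ℤ) < a' - b' := by exact_mod_cast l1
    have m2 : (0 : ℤ) < a' + b' := by exact_mod_cast l2
    have m3 : a' - b' + (a' + b') < 4 := by exact_mod_cast l3
    omega
  · exfalso
    simp only [Complex.mul_re, Complex.mul_im, Complex.neg_re, Complex.neg_im,
      Complex.I_re, Complex.I_im] at hwc
    obtain ⟨h1, h2, h3⟩ := hwc
    -- X = y + (a'-b'), Y = -x + (a'+b')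
    have l1 : (0 : ℝ) < ((a' - b' : ℤ) : ℝ) := by push_cast; linarith
    have l2 : (1 : ℝ) < ((a' + b' : ℤ) : ℝ) := by push_cast; linarith
    have l3 : ((a' - b' + (a' + b') : ℤ) : ℝ) < 4 := by push_cast; linarith
    have m1 : (0 : ℤ) < a' - b' := by exact_mod_cast l1
    have m2 : (1 : ℤ) < a' + b' := by exact_mod_cast l2
    have m3 : a' - b' + (a' + b') < 4 := by exact_mod_cast l3
    omega

-- core lemma for the square
lemma coreU {c w : ℂ} (hc : c ∈ Lat1i) (hw : w ∈ interior GU) (hwc : w + c ∈ GU) : c = 0 := by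
  rw [interior_GU] at hw
  obtain ⟨h1, h2, h3, h4⟩ := hw
  rw [mem_GU] at hwc
  simp only [Complex.add_re, Complex.add_im] at hwc
  obtain ⟨a', b', rfl⟩ := hc
  have hre' : ((1 + Complex.I) * ((a' : ℂ) + (b' : ℂ) * Complex.I)).re = (a' : ℝ) - b' := by
    simp [Complex.mul_re]
  have him' : ((1 + Complex.I) * ((a' : ℂ) + (b' : ℂ) * Complex.I)).im = (a' : ℝ) + b' := by
    simp [Complex.mul_im]; ring
  rw [hre', him'] at hwc
  obtain ⟨k1, k2, k3, k4⟩ := hwc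
  -- sum: (x+y) + 2a' ∈ [0,2], x+y ∈ (0,2) → |2a'| < 2 → a' = 0
  have l1 : ((2*a' : ℤ) : ℝ) < 2 := by push_cast; linarith
  have l2 : (-2 : ℝ) < ((2*a' : ℤ) : ℝ) := by push_cast; linarith
  have l3 : ((2*b' : ℤ) : ℝ) < 2 := by push_cast; linarith
  have l4 : (-2 : ℝ) < ((2*b' : ℤ) : ℝ) := by push_cast; linarith
  have m1 : (2*a' : ℤ) < 2 := by exact_mod_cast l1
  have m2 : (-2 : ℤ) < 2*a' := by exact_mod_cast l2
  have m3 : (2*b' : ℤ) < 2 := by exact_mod_cast l3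
  have m4 : (-2 : ℤ) < 2*b' := by exact_mod_cast l4
  have : a' = 0 ∧ b' = 0 := by omega
  rw [this.1, this.2]; simp

-- covering lemma for GU
lemma GU_cover (z : ℂ) : ∃ c ∈ Lat1i, z - c ∈ GU := by
  set a : ℤ := ⌊(z.re + z.im) / 2⌋ with ha
  set b : ℤ := ⌈(z.im - z.re) / 2⌉ with hb
  refine ⟨(1 + Complex.I) * ((a : ℂ) + (b : ℂ) * Complex.I), ⟨a, b, rfl⟩, ?_⟩
  rw [mem_GU]
  have hre' : ((1 + Complex.I) * ((a : ℂ) + (b : ℂ) * Complex.I)).re = (a : ℝ) - b := by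
    simp [Complex.mul_re]
  have him' : ((1 + Complex.I) * ((a : ℂ) + (b : ℂ) * Complex.I)).im = (a : ℝ) + b := by
    simp [Complex.mul_im]; ring
  simp only [Complex.sub_re, Complex.sub_im, hre', him']
  have f1 := Int.floor_le ((z.re + z.im) / 2)
  have f2 := Int.lt_floor_add_one ((z.re + z.im) / 2)
  have f3 := Int.le_ceil ((z.im - z.re) / 2)
  have f4 := Int.ceil_lt_add_one ((z.im - z.re) / 2)
  rw [← ha] at f1 f2
  rw [← hb] at f3 f4
  refine ⟨by linarith, by linarith, by linarith, by linarith⟩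

lemma not_frontier_Gtri {w : ℂ} (hw : w ∈ Gtri) (h : w ∉ frontier Gtri) :
    w ∈ interior Gtri := by
  rw [isClosed_Gtri.frontier_eq, Set.mem_diff] at h
  push_neg at h
  exact h hw

lemma not_frontier_GU {w : ℂ} (hw : w ∈ GU) (h : w ∉ frontier GU) : w ∈ interior GU := by
  rw [isClosed_GU.frontier_eq, Set.mem_diff] at h
  push_neg at h
  exact h hw

lemma I_pow_ne_zero (n : ℕ) : Complex.I ^ n ≠ 0 := pow_ne_zero n Complex.I_ne_zero

lemma mem_rho_image (k : ℕ) (z : ℂ) :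
    z ∈ rho^[k] '' Gtri ↔ (Complex.I ^ k)⁻¹ * (z - 1) + 1 ∈ Gtri := by
  have hfun : rho^[k] = fun w => Complex.I ^ k * w + (1 - Complex.I ^ k) :=
    funext fun w => by rw [rho_iter]; ring
  rw [hfun, mem_affine_image (I_pow_ne_zero k)]
  have : (Complex.I ^ k)⁻¹ * (z - (1 - Complex.I ^ k)) = (Complex.I ^ k)⁻¹ * (z - 1) + 1 := by
    field_simp; ring
  rw [this]

lemma mem_rho0 (z : ℂ) : z ∈ rho^[0] '' Gtri ↔ 1 ≤ z.re ∧ 0 ≤ z.im ∧ z.re + z.im ≤ 2 := by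
  rw [mem_rho_image, pow_zero, inv_one, one_mul, mem_Gtri]
  constructor <;> rintro ⟨h1, h2, h3⟩ <;>
    simp only [Complex.add_re, Complex.add_im, Complex.sub_re, Complex.sub_im,
      Complex.one_re, Complex.one_im] at * <;>
    refine ⟨by linarith, by linarith, by linarith⟩

lemma mem_rho1 (z : ℂ) : z ∈ rho^[1] '' Gtri ↔ 0 ≤ z.im ∧ z.re ≤ 1 ∧ z.im ≤ z.re := by
  rw [mem_rho_image, pow_one, Complex.inv_I, mem_Gtri]
  simp only [Complex.add_re, Complex.add_im, Complex.mul_re, Complex.mul_im,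
    Complex.neg_re, Complex.neg_im, Complex.I_re, Complex.I_im, Complex.sub_re,
    Complex.sub_im, Complex.one_re, Complex.one_im]
  constructor <;> rintro ⟨h1, h2, h3⟩ <;> refine ⟨by linarith, by linarith, by linarith⟩

lemma mem_rho2 (z : ℂ) : z ∈ rho^[2] '' Gtri ↔ z.re ≤ 1 ∧ z.im ≤ 0 ∧ 0 ≤ z.re + z.im := by
  rw [mem_rho_image, show (Complex.I ^ 2)⁻¹ = -1 by rw [Complex.I_sq]; norm_num, mem_Gtri]
  simp only [Complex.add_re, Complex.add_im, Complex.mul_re, Complex.mul_im,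
    Complex.neg_re, Complex.neg_im, Complex.sub_re, Complex.sub_im,
    Complex.one_re, Complex.one_im]
  constructor <;> rintro ⟨h1, h2, h3⟩ <;> refine ⟨by linarith, by linarith, by linarith⟩

lemma mem_rho3 (z : ℂ) : z ∈ rho^[3] '' Gtri ↔ z.im ≤ 0 ∧ 1 ≤ z.re ∧ z.re - z.im ≤ 2 := by
  rw [mem_rho_image, show (Complex.I ^ 3)⁻¹ = Complex.I by
    rw [pow_succ, Complex.I_sq, neg_one_mul, inv_neg, Complex.inv_I, neg_neg], mem_Gtri]
  simp only [Complex.add_re, Complex.add_im, Complex.mul_re, Complex.mul_im,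
    Complex.neg_re, Complex.neg_im, Complex.I_re, Complex.I_im, Complex.sub_re,
    Complex.sub_im, Complex.one_re, Complex.one_im]
  constructor <;> rintro ⟨h1, h2, h3⟩ <;> refine ⟨by linarith, by linarith, by linarith⟩

lemma I_pow_mod (k : ℕ) : Complex.I ^ k = Complex.I ^ (k % 4) := by
  conv_lhs => rw [← Nat.div_add_mod k 4]
  rw [pow_add, pow_mul, Complex.I_pow_four, one_pow, one_mul]

lemma rho_iterate_mod (k : ℕ) : rho^[k] = rho^[k % 4] := by
  funext z
  rw [rho_iter, rho_iter, I_pow_mod]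

lemma I_pow_fin_inj {k₁ k₂ : Fin 4} (h : Complex.I ^ (k₁ : ℕ) = Complex.I ^ (k₂ : ℕ)) :
    k₁ = k₂ := by
  fin_cases k₁ <;> fin_cases k₂ <;>
    simp_all [pow_succ, Complex.ext_iff] <;> norm_num at h

lemma exact_aux (k₁ k₂ : Fin 4) {c₁ c₂ : ℂ} (h1 : c₁ ∈ Lat1i) (h2 : c₂ ∈ Lat1i)
    {w₁ w₂ : ℂ} (hw1 : w₁ ∈ Gtri) (hw2 : w₂ ∈ Gtri)
    (heq : Complex.I ^ (k₁ : ℕ) * w₁ + c₁ = Complex.I ^ (k₂ : ℕ) * w₂ + c₂)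
    (hne : (k₁, c₁) ≠ (k₂, c₂)) : w₁ ∈ frontier Gtri := by
  by_contra hB
  have hint : w₁ ∈ interior Gtri := not_frontier_Gtri hw1 hB
  have hk2 : (k₂ : ℕ) ≤ 3 := by omega
  have hI4 : Complex.I ^ (4 - (k₂ : ℕ)) * Complex.I ^ (k₂ : ℕ) = 1 := by
    rw [← pow_add, show 4 - (k₂ : ℕ) + (k₂ : ℕ) = 4 by omega]
    exact Complex.I_pow_four
  have key : Complex.I ^ ((k₁ : ℕ) + 4 - (k₂ : ℕ)) * w₁
      + Complex.I ^ (4 - (k₂ : ℕ)) * (c₁ - c₂) = w₂ := by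
    have h4 : (k₁ : ℕ) + 4 - (k₂ : ℕ) = (4 - (k₂ : ℕ)) + (k₁ : ℕ) := by omega
    rw [h4, pow_add]
    have e : Complex.I ^ (k₁ : ℕ) * w₁ + (c₁ - c₂) = Complex.I ^ (k₂ : ℕ) * w₂ := by
      linear_combination heq
    linear_combination Complex.I ^ (4 - (k₂ : ℕ)) * e + w₂ * hI4
  obtain ⟨hu1, hd0⟩ := core (I_pow_cases _) (lat_mul_I_pow _ (lat_sub h1 h2)) hint
    (key ▸ hw2)
  have hcc : c₁ = c₂ := by
    have := mul_eq_zero.mp hd0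
    rcases this with h | h
    · exact absurd h (I_pow_ne_zero _)
    · exact sub_eq_zero.mp h
  have hkk : Complex.I ^ (k₁ : ℕ) = Complex.I ^ (k₂ : ℕ) := by
    have h5 : (k₁ : ℕ) + 4 - (k₂ : ℕ) + (k₂ : ℕ) = (k₁ : ℕ) + 4 := by omega
    calc Complex.I ^ (k₁ : ℕ) = Complex.I ^ ((k₁ : ℕ) + 4) := by
          rw [pow_add, Complex.I_pow_four, mul_one]
      _ = Complex.I ^ ((k₁ : ℕ) + 4 - (k₂ : ℕ) + (k₂ : ℕ)) := by rw [h5]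
      _ = Complex.I ^ ((k₁ : ℕ) + 4 - (k₂ : ℕ)) * Complex.I ^ (k₂ : ℕ) := pow_add _ _ _
      _ = Complex.I ^ (k₂ : ℕ) := by rw [hu1, one_mul]
  exact hne (by rw [I_pow_fin_inj hkk, hcc])


set_option maxHeartbeats 1000000 in
/-- (a) `G_U` is an exact fundamental domain for the action
of `(1+i)ℤ[i]` on `ℂ` by translations; (b) `G_U = ⋃_{k=0}^{3} ρᵏ(G)` where
`ρ(z) = i(z−1)+1`, with `ρᵏ(G) ∩ G ⊆ ∂G` for `k ≢ 0 mod 4`; (c) `G` is an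
exact fundamental domain for the action on `ℂ` of the group
`A = {z ↦ iᵏ·z + c : k ∈ ℤ, c ∈ (1+i)ℤ[i]}`. -/
theorem stmt11 :
    -- (a)
    ((⋃ c ∈ Lat1i, (fun z => z + c) '' GU) = Set.univ ∧
      ∀ c₁ ∈ Lat1i, ∀ c₂ ∈ Lat1i, c₁ ≠ c₂ →
        ((fun z => z + c₁) '' GU) ∩ ((fun z => z + c₂) '' GU) ⊆
          ((fun z => z + c₁) '' frontier GU) ∩ ((fun z => z + c₂) '' frontier GU)) ∧
    -- (b)
    (GU = ⋃ k : Fin 4, rho^[(k : ℕ)] '' Gtri ∧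
      ∀ k : ℕ, k % 4 ≠ 0 → (rho^[k] '' Gtri) ∩ Gtri ⊆ frontier Gtri) ∧
    -- (c)
    ((⋃ k : Fin 4, ⋃ c ∈ Lat1i, (fun z => Complex.I ^ (k : ℕ) * z + c) '' Gtri) =
        Set.univ ∧
      ∀ k₁ k₂ : Fin 4, ∀ c₁ ∈ Lat1i, ∀ c₂ ∈ Lat1i, (k₁, c₁) ≠ (k₂, c₂) →
        ((fun z => Complex.I ^ (k₁ : ℕ) * z + c₁) '' Gtri) ∩
            ((fun z => Complex.I ^ (k₂ : ℕ) * z + c₂) '' Gtri) ⊆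
          ((fun z => Complex.I ^ (k₁ : ℕ) * z + c₁) '' frontier Gtri) ∩
            ((fun z => Complex.I ^ (k₂ : ℕ) * z + c₂) '' frontier Gtri)) := by
  have partb1 : GU = ⋃ k : Fin 4, rho^[(k : ℕ)] '' Gtri := by
    ext z
    simp only [Set.mem_iUnion]
    constructor
    · intro hz
      rw [mem_GU] at hz
      obtain ⟨h1, h2, h3, h4⟩ := hz
      rcases le_total 0 z.im with hy | hy <;> rcases le_total 1 z.re with hx | hx
      · exact ⟨0, (mem_rho0 z).mpr ⟨hx, hy, h3⟩⟩
      · exact ⟨1, (mem_rho1 z).mpr ⟨hy, hx, h1⟩⟩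
      · exact ⟨3, (mem_rho3 z).mpr ⟨hy, hx, h4⟩⟩
      · exact ⟨2, (mem_rho2 z).mpr ⟨hx, hy, by linarith⟩⟩
    · rintro ⟨k, hk⟩
      rw [mem_GU]
      fin_cases k
      · rw [show ((⟨0, by norm_num⟩ : Fin 4) : ℕ) = 0 from rfl] at hk
        rw [mem_rho0] at hk
        exact ⟨by linarith [hk.1, hk.2.1], by linarith [hk.1, hk.2.1],
          hk.2.2, by linarith [hk.1, hk.2.1, hk.2.2]⟩
      · rw [show ((⟨1, by norm_num⟩ : Fin 4) : ℕ) = 1 from rfl] at hk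
        rw [mem_rho1] at hk
        exact ⟨by linarith [hk.1, hk.2.1, hk.2.2], by linarith [hk.1, hk.2.1, hk.2.2],
          by linarith [hk.1, hk.2.1, hk.2.2], by linarith [hk.1, hk.2.1, hk.2.2]⟩
      · rw [show ((⟨2, by norm_num⟩ : Fin 4) : ℕ) = 2 from rfl] at hk
        rw [mem_rho2] at hk
        exact ⟨by linarith [hk.1, hk.2.1, hk.2.2], by linarith [hk.1, hk.2.1, hk.2.2],
          by linarith [hk.1, hk.2.1, hk.2.2], by linarith [hk.1, hk.2.1, hk.2.2]⟩
      · rw [show ((⟨3, by norm_num⟩ : Fin 4) : ℕ) = 3 from rfl] at hk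
        rw [mem_rho3] at hk
        exact ⟨by linarith [hk.1, hk.2.1, hk.2.2], by linarith [hk.1, hk.2.1, hk.2.2],
          by linarith [hk.1, hk.2.1, hk.2.2], by linarith [hk.1, hk.2.1, hk.2.2]⟩
  refine ⟨⟨?_, ?_⟩, ⟨partb1, ?_⟩, ⟨?_, ?_⟩⟩
  · -- (a) covering
    rw [Set.eq_univ_iff_forall]
    intro z
    obtain ⟨c, hc, hmem⟩ := GU_cover z
    simp only [Set.mem_iUnion]
    exact ⟨c, hc, (mem_trans_image GU).mpr hmem⟩
  · -- (a) exactness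
    intro c₁ hc₁ c₂ hc₂ hne z hz
    obtain ⟨hz1, hz2⟩ := hz
    rw [mem_trans_image] at hz1 hz2
    have f1 : z - c₁ ∈ frontier GU := by
      by_contra hB
      have hint := not_frontier_GU hz1 hB
      have : c₁ - c₂ = 0 := coreU (lat_sub hc₁ hc₂) hint (by
        have : z - c₁ + (c₁ - c₂) = z - c₂ := by ring
        rw [this]; exact hz2)
      exact hne (by linear_combination this)
    have f2 : z - c₂ ∈ frontier GU := by
      by_contra hB
      have hint := not_frontier_GU hz2 hB
      have : c₂ - c₁ = 0 := coreU (lat_sub hc₂ hc₁) hint (by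
        have : z - c₂ + (c₂ - c₁) = z - c₁ := by ring
        rw [this]; exact hz1)
      exact hne (by linear_combination -this)
    exact ⟨(mem_trans_image (frontier GU)).mpr f1, (mem_trans_image (frontier GU)).mpr f2⟩
  · -- (b) exactness
    intro k hk z hz
    obtain ⟨hz1, hz2⟩ := hz
    rw [rho_iterate_mod] at hz1
    rw [isClosed_Gtri.frontier_eq, Set.mem_diff, interior_Gtri]
    have hG := mem_Gtri.mp hz2
    have hr : k % 4 = 1 ∨ k % 4 = 2 ∨ k % 4 = 3 := by omega
    rcases hr with hr | hr | hr <;> rw [hr] at hz1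
    · rw [mem_rho1] at hz1
      exact ⟨hz2, by simp only [Set.mem_setOf_eq]; push_neg; intro h _; linarith [hz1.2.1]⟩
    · rw [mem_rho2] at hz1
      exact ⟨hz2, by simp only [Set.mem_setOf_eq]; push_neg; intro h _; linarith [hz1.1]⟩
    · rw [mem_rho3] at hz1
      exact ⟨hz2, by simp only [Set.mem_setOf_eq]; push_neg; intro _ h; linarith [hz1.1]⟩
  · -- (c) covering
    rw [Set.eq_univ_iff_forall]
    intro z
    obtain ⟨c, hc, hmem⟩ := GU_cover z
    rw [partb1] at hmem
    simp only [Set.mem_iUnion] at hmem ⊢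
    obtain ⟨k, w, hw, hwz⟩ := hmem
    rw [rho_iter] at hwz
    refine ⟨k, 1 - Complex.I ^ (k : ℕ) + c, lat_add (one_sub_I_pow_mem _) hc,
      w, hw, ?_⟩
    show Complex.I ^ (k : ℕ) * w + (1 - Complex.I ^ (k : ℕ) + c) = z
    linear_combination hwz
  · -- (c) exactness
    intro k₁ k₂ c₁ hc₁ c₂ hc₂ hne z hz
    obtain ⟨hz1, hz2⟩ := hz
    obtain ⟨w₁, hw₁, e₁⟩ := hz1
    obtain ⟨w₂, hw₂, e₂⟩ := hz2
    have e₁' : Complex.I ^ (k₁ : ℕ) * w₁ + c₁ = z := e₁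
    have e₂' : Complex.I ^ (k₂ : ℕ) * w₂ + c₂ = z := e₂
    have heq : Complex.I ^ (k₁ : ℕ) * w₁ + c₁ = Complex.I ^ (k₂ : ℕ) * w₂ + c₂ :=
      e₁'.trans e₂'.symm
    refine ⟨⟨w₁, exact_aux k₁ k₂ hc₁ hc₂ hw₁ hw₂ heq hne, e₁⟩,
      ⟨w₂, exact_aux k₂ k₁ hc₂ hc₁ hw₂ hw₁ heq.symm (fun h => hne h.symm), e₂⟩⟩
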